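/- Let G be a group with elements x_{ts} satisfying the Birman-Ko-Lee relations. Then for any t > t_3 > t_2 > t_1 ≥ 1 with t_2 > s ≥ 1, and for any word V that is a product of generators x_{kl} with t_2 - 1 ≥ k > l ≥ 1, one has x_{ts} V x_{t_2 t_1} x_{t_3 t_1} = x_{t_3 t_2} x_{ts} V x_{t_2 t_1}. -/
import Mathlib


theorem bkl_rel5 {G : Type*} [Group G] (n : ℕ) (x : ℕ → ℕ → G)
    (hcomm : ∀ t s r q : ℕ, t ≤ n → s < t → 1 ≤ s → r ≤ n → q < r → 1 ≤ q →
      0 < ((t : ℤ) - r) * ((t : ℤ) - q) * ((s : ℤ) - r) * ((s : ℤ) - q) →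
      x t s * x r q = x r q * x t s)
    (hband1 : ∀ t s r : ℕ, t ≤ n → s < t → r < s → 1 ≤ r →
      x t s * x s r = x t r * x t s)
    (hband2 : ∀ t s r : ℕ, t ≤ n → s < t → r < s → 1 ≤ r →
      x t r * x t s = x s r * x t r) :
    ∀ t s t₁ t₂ t₃ : ℕ, ∀ V : G, t ≤ n → t₃ < t → t₂ < t₃ → t₁ < t₂ → 1 ≤ t₁ → s < t₂ → 1 ≤ s →
      V ∈ Submonoid.closure {g : G | ∃ k l : ℕ, k ≤ t₂ - 1 ∧ l < k ∧ 1 ≤ l ∧ g = x k l} →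
      x t s * V * x t₂ t₁ * x t₃ t₁ = x t₃ t₂ * x t s * V * x t₂ t₁ := by
  intro t s t₁ t₂ t₃ V htn ht3 ht2 ht1 h1 hst2 hs1 hV
  have ht3n : t₃ ≤ n := le_of_lt (lt_of_lt_of_le ht3 htn)
  have h1t2 : 1 ≤ t₂ := le_of_lt (lt_of_le_of_lt h1 ht1)
  -- x t₂ t₁ * x t₃ t₁ = x t₃ t₂ * x t₂ t₁
  have key : x t₂ t₁ * x t₃ t₁ = x t₃ t₂ * x t₂ t₁ := by
    have e1 := hband2 t₃ t₂ t₁ ht3n ht2 ht1 h1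
    have e2 := hband1 t₃ t₂ t₁ ht3n ht2 ht1 h1
    -- e1 : x t₃ t₁ * x t₃ t₂ = x t₂ t₁ * x t₃ t₁
    -- e2 : x t₃ t₂ * x t₂ t₁ = x t₃ t₁ * x t₃ t₂
    rw [e2, e1]
  -- x t₃ t₂ commutes with x t s
  have hc1 : x t s * x t₃ t₂ = x t₃ t₂ * x t s := by
    apply hcomm t s t₃ t₂ htn (lt_trans hst2 (lt_trans ht2 ht3)) hs1 ht3n ht2 h1t2
    have h1 : (0:ℤ) < (t : ℤ) - t₃ := by
      have := ht3; push_cast; omega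
    have h2 : (0:ℤ) < (t : ℤ) - t₂ := by push_cast; omega
    have h3 : (s : ℤ) - t₃ < 0 := by push_cast; omega
    have h4 : (s : ℤ) - t₂ < 0 := by push_cast; omega
    have := mul_pos (mul_pos h1 h2) (mul_pos_of_neg_of_neg h3 h4)
    nlinarith [this]
  -- x t₃ t₂ commutes with V
  have hcV : V * x t₃ t₂ = x t₃ t₂ * V := by
    induction hV using Submonoid.closure_induction with
    | one => simp
    | mul a b _ _ ha hb => rw [mul_assoc, hb, ← mul_assoc, ha, mul_assoc]
    | mem g hg =>
      obtain ⟨k, l, hk, hlk, hl1, rfl⟩ := hg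
      have hkt2 : k < t₂ := by omega
      have hkn : k ≤ n := by omega
      symm
      apply hcomm t₃ t₂ k l ht3n ht2 h1t2 hkn hlk hl1
      have h1 : (0:ℤ) < (t₃ : ℤ) - k := by push_cast; omega
      have h2 : (0:ℤ) < (t₃ : ℤ) - l := by push_cast; omega
      have h3 : (0:ℤ) < (t₂ : ℤ) - k := by push_cast; omega
      have h4 : (0:ℤ) < (t₂ : ℤ) - l := by push_cast; omega
      positivity
  calc x t s * V * x t₂ t₁ * x t₃ t₁
      = x t s * V * (x t₂ t₁ * x t₃ t₁) := by group
    _ = x t s * V * (x t₃ t₂ * x t₂ t₁) := by rw [key]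
    _ = x t s * (V * x t₃ t₂) * x t₂ t₁ := by group
    _ = x t s * x t₃ t₂ * V * x t₂ t₁ := by rw [hcV]; group
    _ = x t₃ t₂ * x t s * V * x t₂ t₁ := by rw [hc1]
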